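/- Let p₁, …, p_m be points in convex position in counterclockwise order and let S be a multiset of segments on these points. Suppose segment p_a p_b (a < b) has minimum positive crossing depth among segments of S that have crossings, where the crossing depth δ×(p_a p_b) is the number of points strictly between p_a and p_b (indices a+1,…,b−1) that are endpoints of some segment of S involved in a crossing. Let q be the ⌈δ×(p_a p_b)/2⌉-th such point. Then q is the endpoint of a segment of S that crosses p_a p_b. -/
import Mathlib


abbrev Plane := EuclideanSpace ℝ (Fin 2)

/-- Two segments cross: they intersect in exactly one point, which is interior to both. -/
def SegCross (a b c d : Plane) : Prop :=
  ∃ x, segment ℝ a b ∩ segment ℝ c d = {x} ∧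
    x ∈ openSegment ℝ a b ∧ x ∈ openSegment ℝ c d

/-- Orientation determinant of two vectors of the plane. -/
def det2 (u v : Plane) : ℝ := u 0 * v 1 - u 1 * v 0

/-- A segment of `S` (given by its index pair) has crossings in `S`. -/
def HasCrossings {m : ℕ} (p : Fin m → Plane) (S : Multiset (Fin m × Fin m))
    (s : Fin m × Fin m) : Prop :=
  ∃ s' ∈ S, SegCross (p s.1) (p s.2) (p s'.1) (p s'.2)

/-- The set of indices strictly between `a` and `b` that are endpoints of a segment
of `S` with crossings. -/
def crossDepthSet {m : ℕ} (p : Fin m → Plane) (S : Multiset (Fin m × Fin m))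
    (a b : Fin m) : Set (Fin m) :=
  {i | a < i ∧ i < b ∧ ∃ s ∈ S, (s.1 = i ∨ s.2 = i) ∧ HasCrossings p S s}

/-- The crossing depth of the segment with index pair `(a, b)`. -/
noncomputable def crossDepth {m : ℕ} (p : Fin m → Plane) (S : Multiset (Fin m × Fin m))
    (a b : Fin m) : ℕ :=
  (crossDepthSet p S a b).ncard

lemma det2_affine (v P A C : Plane) (t : ℝ) :
    det2 v ((1 - t) • A + t • C - P) = (1 - t) * det2 v (A - P) + t * det2 v (C - P) := by
  simp only [det2, PiLp.sub_apply, PiLp.add_apply, PiLp.smul_apply, smul_eq_mul]; ring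

lemma det2_collinear (v w : Plane) (h : det2 v w = 0) (hv : v ≠ 0) : ∃ u : ℝ, w = u • v := by
  simp only [det2] at h
  by_cases h0 : v 0 = 0
  · have h1 : v 1 ≠ 0 := by
      intro h1; apply hv; ext i; fin_cases i <;> simp [h0, h1]
    have hw0 : w 0 = 0 := by
      rw [h0] at h
      have : v 1 * w 0 = 0 := by linarith
      exact (mul_eq_zero.1 this).resolve_left h1
    refine ⟨w 1 / v 1, ?_⟩
    ext i; fin_cases i
    · show w 0 = (w 1 / v 1) * v 0
      rw [hw0, h0]; ring
    · show w 1 = (w 1 / v 1) * v 1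
      field_simp
  · refine ⟨w 0 / v 0, ?_⟩
    ext i; fin_cases i
    · show w 0 = (w 0 / v 0) * v 0
      field_simp
    · show w 1 = (w 0 / v 0) * v 1
      field_simp; nlinarith [h]

/-- Chords `BD` and `AC` of a convex quadrilateral `A B C D` (ccw) cross. -/
lemma chords_cross (A B C D : Plane)
    (h1 : 0 < det2 (B - A) (C - A)) (h2 : 0 < det2 (B - A) (D - A))
    (h3 : 0 < det2 (C - A) (D - A)) (h4 : 0 < det2 (C - B) (D - B)) :
    SegCross B D A C := by
  set oA : ℝ := det2 (D - B) (A - B) with hoA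
  set oC : ℝ := det2 (D - B) (C - B) with hoC
  set oB : ℝ := det2 (C - A) (B - A) with hoB
  set oD : ℝ := det2 (C - A) (D - A) with hoD
  have hoApos : 0 < oA := by
    have : oA = det2 (B - A) (D - A) := by
      simp only [hoA, det2, PiLp.sub_apply]; ring
    rw [this]; exact h2
  have hoCneg : oC < 0 := by
    have : oC = -det2 (C - B) (D - B) := by
      simp only [hoC, det2, PiLp.sub_apply]; ring
    rw [this]; linarith
  have hoBneg : oB < 0 := by
    have : oB = -det2 (B - A) (C - A) := by
      simp only [hoB, det2, PiLp.sub_apply]; ring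
    rw [this]; linarith
  have hoDpos : 0 < oD := h3
  have hden : 0 < oA - oC := by linarith
  set t : ℝ := oA / (oA - oC) with ht
  have ht0 : 0 < t := div_pos hoApos hden
  have ht1 : t < 1 := by rw [ht, div_lt_one hden]; linarith
  set x : Plane := (1 - t) • A + t • C with hx
  have hxBD : det2 (D - B) (x - B) = 0 := by
    rw [hx, det2_affine, ← hoA, ← hoC, ht]
    field_simp
    ring
  have hDB : D - B ≠ 0 := by
    intro h
    rw [hoA, h] at hoApos
    simp [det2] at hoApos
  obtain ⟨u, hu⟩ := det2_collinear _ _ hxBD hDB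
  have hxu : x = (1 - u) • B + u • D := by
    have h0 : x - B = u • (D - B) := hu
    have h' : x = B + u • (D - B) := by
      rw [← h0]; abel
    rw [h']; module
  have hxAC : det2 (C - A) (x - A) = 0 := by
    rw [hx, det2_affine]
    have e1 : det2 (C - A) (A - A) = 0 := by simp [det2]
    have e2 : det2 (C - A) (C - A) = 0 := by simp [det2]; ring
    rw [e1, e2]; ring
  have huval : (1 - u) * oB + u * oD = 0 := by
    rw [hoB, hoD, ← det2_affine, ← hxu]
    exact hxAC
  have hu0 : 0 < u := by nlinarith
  have hu1 : u < 1 := by nlinarith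
  refine ⟨x, ?_, ?_, ?_⟩
  · ext y
    simp only [Set.mem_inter_iff, Set.mem_singleton_iff]
    constructor
    · rintro ⟨hyBD, hyAC⟩
      rw [segment_eq_image] at hyBD hyAC
      obtain ⟨r, hr, hyr⟩ := hyBD
      obtain ⟨s, hs, hys⟩ := hyAC
      have hyr' : (1 - r) • B + r • D = y := hyr
      have hys' : (1 - s) • A + s • C = y := hys
      have hy0 : det2 (D - B) (y - B) = 0 := by
        rw [← hyr', det2_affine]
        have e1 : det2 (D - B) (B - B) = 0 := by simp [det2]
        have e2 : det2 (D - B) (D - B) = 0 := by simp [det2]; ring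
        rw [e1, e2]; ring
      have hy0' : (1 - s) * oA + s * oC = 0 := by
        rw [hoA, hoC, ← det2_affine, hys']
        exact hy0
      have hst : s = t := by
        rw [ht]
        field_simp
        linarith
      rw [← hys', hst, ← hx]
    · rintro rfl
      constructor
      · rw [segment_eq_image]
        exact ⟨u, ⟨le_of_lt hu0, le_of_lt hu1⟩, hxu.symm⟩
      · rw [segment_eq_image]
        exact ⟨t, ⟨le_of_lt ht0, le_of_lt ht1⟩, hx.symm⟩
  · rw [openSegment_eq_image]
    exact ⟨u, ⟨hu0, hu1⟩, hxu.symm⟩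
  · rw [openSegment_eq_image]
    exact ⟨t, ⟨ht0, ht1⟩, hx.symm⟩

lemma segCross_comm {a b c d : Plane} (h : SegCross a b c d) : SegCross c d a b := by
  obtain ⟨x, h1, h2, h3⟩ := h
  exact ⟨x, by rw [Set.inter_comm]; exact h1, h3, h2⟩

lemma segCross_symm_left {a b c d : Plane} (h : SegCross a b c d) : SegCross b a c d := by
  obtain ⟨x, h1, h2, h3⟩ := h
  exact ⟨x, by rw [segment_symm]; exact h1, by rw [openSegment_symm]; exact h2, h3⟩

theorem median_point_crosses_min_depth_segment {m : ℕ} (p : Fin m → Plane)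
    (hccw : ∀ i j k : Fin m, i < j → j < k →
      0 < det2 (p j - p i) (p k - p i))
    (S : Multiset (Fin m × Fin m)) (hord : ∀ s ∈ S, s.1 < s.2)
    (a b : Fin m) (hab : a < b) (habS : (a, b) ∈ S)
    (habcross : HasCrossings p S (a, b))
    (hmin : ∀ s ∈ S, HasCrossings p S s → crossDepth p S a b ≤ crossDepth p S s.1 s.2)
    (q : Fin m) (hq : q ∈ crossDepthSet p S a b)
    (hqrank : {r ∈ crossDepthSet p S a b | r < q}.ncard =
      (crossDepth p S a b + 1) / 2 - 1) :
    ∃ c : Fin m, ((q, c) ∈ S ∨ (c, q) ∈ S) ∧ SegCross (p q) (p c) (p a) (p b) := by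
  classical
  obtain ⟨haq, hqb, s, hsS, hsq, hscross⟩ := hq
  set D := crossDepthSet p S a b with hD
  set L := {r ∈ D | r < q} with hL
  set G := {r ∈ D | q < r} with hG
  have hqD : q ∈ D := ⟨haq, hqb, s, hsS, hsq, hscross⟩
  have hDfin : D.Finite := Set.toFinite _
  have hLfin : L.Finite := Set.toFinite _
  have hGfin : G.Finite := Set.toFinite _
  have hδpos : 1 ≤ crossDepth p S a b := by
    have : 0 < D.ncard := (Set.ncard_pos hDfin).2 ⟨q, hqD⟩
    exact this
  -- partition of D
  have hsplit : D = L ∪ ({q} ∪ G) := by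
    ext r
    constructor
    · intro hr
      rcases lt_trichotomy r q with h | h | h
      · exact Or.inl ⟨hr, h⟩
      · exact Or.inr (Or.inl h)
      · exact Or.inr (Or.inr ⟨hr, h⟩)
    · rintro (⟨hr, _⟩ | (h | ⟨hr, _⟩))
      · exact hr
      · rwa [Set.mem_singleton_iff.1 h]
      · exact hr
  have hdisj1 : Disjoint L ({q} ∪ G) := by
    rw [Set.disjoint_left]
    rintro r ⟨_, hrq⟩ (h | ⟨_, h⟩)
    · exact absurd (Set.mem_singleton_iff.1 h) (ne_of_lt hrq)
    · exact absurd (hrq.trans h) (lt_irrefl r)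
  have hdisj2 : Disjoint ({q} : Set (Fin m)) G := by
    rw [Set.disjoint_left]
    rintro r h ⟨_, hqr⟩
    rw [Set.mem_singleton_iff.1 h] at hqr
    exact absurd hqr (lt_irrefl q)
  have hcard : L.ncard + (1 + G.ncard) = crossDepth p S a b := by
    have h1 : ({q} ∪ G : Set (Fin m)).ncard = 1 + G.ncard := by
      rw [Set.ncard_union_eq hdisj2 (Set.toFinite _) hGfin, Set.ncard_singleton]
    have h2 : D.ncard = L.ncard + ({q} ∪ G).ncard := by
      rw [hsplit] at hDfin ⊢
      exact Set.ncard_union_eq hdisj1 hLfin (Set.toFinite _)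
    rw [← h1, ← h2]
    rfl
  rcases hsq with hsq | hsq
  · -- s = (q, c) with q < c
    set c := s.2 with hc
    have hqc : q < c := hsq ▸ hord s hsS
    have hsqc : (q, c) = s := by rw [← hsq, hc]
    by_cases hcb : c ≤ b
    · exfalso
      have hsub : crossDepthSet p S q c ⊆ G := by
        rintro r ⟨h1, h2, h3⟩
        exact ⟨⟨haq.trans h1, lt_of_lt_of_le h2 hcb, h3⟩, h1⟩
      have hle : crossDepth p S q c ≤ G.ncard := Set.ncard_le_ncard hsub hGfin
      have hmins : crossDepth p S a b ≤ crossDepth p S q c := by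
        have h0 := hmin s hsS hscross
        rw [hsq] at h0
        exact h0
      omega
    · push_neg at hcb
      have hcross := chords_cross (p a) (p q) (p b) (p c)
        (hccw a q b haq hqb) (hccw a q c haq (hqb.trans hcb))
        (hccw a b c (haq.trans hqb) hcb) (hccw q b c hqb hcb)
      exact ⟨c, Or.inl (hsqc ▸ hsS), hcross⟩
  · -- s = (c, q) with c < q
    set c := s.1 with hc
    have hcq : c < q := by rw [hc, ← hsq]; exact hord s hsS
    have hsqc : (c, q) = s := by rw [← hsq, hc]
    by_cases hac : a ≤ c
    · exfalso
      have hsub : crossDepthSet p S c q ⊆ L := by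
        rintro r ⟨h1, h2, h3⟩
        exact ⟨⟨lt_of_le_of_lt hac h1, h2.trans hqb, h3⟩, h2⟩
      have hle : crossDepth p S c q ≤ L.ncard := Set.ncard_le_ncard hsub hLfin
      have hmins : crossDepth p S a b ≤ crossDepth p S c q := by
        have h0 := hmin s hsS hscross
        rw [hsq] at h0
        exact h0
      omega
    · push_neg at hac
      have hcross := chords_cross (p c) (p a) (p q) (p b)
        (hccw c a q hac haq)
        (hccw c a b hac hab)
        (hccw c q b hcq hqb) (hccw a q b haq hqb)
      exact ⟨c, Or.inr (hsqc ▸ hsS), segCross_symm_left (segCross_comm hcross)⟩
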